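/- In a group G with elements g1, gj, gj1 satisfying gj * g1 = g1⁻¹ * gj, gj1 * gj = g1 * gj * gj1, and g1 central among {g1, gj1} (i.e., g1 commutes with gj1), for all integers a, b we have gj1^a * gj^b = g1^(a·b') * gj^b * gj1^a, where b' = b mod 2 ∈ {0,1}. -/

import Mathlib

theorem stmt1 {G : Type*} [Group G] (g1 gj gj1 : G)
    (h1 : gj * g1 = g1⁻¹ * gj) (h2 : gj1 * gj = g1 * gj * gj1)
    (h3 : g1 * gj1 = gj1 * g1) :
    ∀ a b : ℤ, gj1 ^ a * gj ^ b = g1 ^ (a * (b % 2)) * gj ^ b * gj1 ^ a := by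
  have c1 : Commute g1 gj1 := h3
  have hsq : gj ^ (2:ℤ) = gj * gj := by
    rw [show (2:ℤ) = ((2:ℕ):ℤ) by norm_num, zpow_natCast, sq]
  have c2 : Commute gj1 (gj ^ (2:ℤ)) := by
    rw [Commute, SemiconjBy, hsq]
    calc gj1 * (gj * gj) = (gj1 * gj) * gj := (mul_assoc _ _ _).symm
    _ = (g1 * gj * gj1) * gj := by rw [h2]
    _ = (g1 * gj) * (gj1 * gj) := by group
    _ = (g1 * gj) * (g1 * gj * gj1) := by rw [h2]
    _ = g1 * (gj * g1) * gj * gj1 := by group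
    _ = g1 * (g1⁻¹ * gj) * gj * gj1 := by rw [h1]
    _ = gj * gj * gj1 := by group
  have c3 : Commute g1 (gj ^ (2:ℤ)) := by
    rw [Commute, SemiconjBy, hsq]
    calc g1 * (gj * gj) = g1 * (gj * g1) * g1⁻¹ * gj := by group
    _ = g1 * (g1⁻¹ * gj) * g1⁻¹ * gj := by rw [h1]
    _ = gj * g1⁻¹ * gj := by group
    _ = gj * (g1⁻¹ * gj) := by rw [mul_assoc]
    _ = gj * (gj * g1) := by rw [← h1]
    _ = gj * gj * g1 := (mul_assoc _ _ _).symm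
  have key : ∀ b : ℤ, gj1 * gj ^ b = g1 ^ (b % 2) * gj ^ b * gj1 := by
    intro b
    have hsmall : gj1 * gj ^ (b % 2) = g1 ^ (b % 2) * gj ^ (b % 2) * gj1 := by
      rcases Int.emod_two_eq b with h | h <;> rw [h]
      · simp
      · simpa using h2
    have hsplit : gj ^ b = (gj ^ (2:ℤ)) ^ (b / 2) * gj ^ (b % 2) := by
      conv_lhs => rw [← Int.mul_ediv_add_emod b 2]
      rw [zpow_add, zpow_mul]
    have hc2 : gj1 * (gj ^ (2:ℤ)) ^ (b / 2) = (gj ^ (2:ℤ)) ^ (b / 2) * gj1 :=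
      (c2.zpow_right _).eq
    have hc3 : g1 ^ (b % 2) * (gj ^ (2:ℤ)) ^ (b / 2) = (gj ^ (2:ℤ)) ^ (b / 2) * g1 ^ (b % 2) :=
      ((c3.zpow_right _).zpow_left _).eq
    rw [hsplit]
    calc gj1 * ((gj ^ (2:ℤ)) ^ (b / 2) * gj ^ (b % 2))
        = (gj1 * (gj ^ (2:ℤ)) ^ (b / 2)) * gj ^ (b % 2) := (mul_assoc _ _ _).symm
    _ = (gj ^ (2:ℤ)) ^ (b / 2) * (gj1 * gj ^ (b % 2)) := by rw [hc2, mul_assoc]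
    _ = (gj ^ (2:ℤ)) ^ (b / 2) * (g1 ^ (b % 2) * gj ^ (b % 2) * gj1) := by rw [hsmall]
    _ = ((gj ^ (2:ℤ)) ^ (b / 2) * g1 ^ (b % 2)) * gj ^ (b % 2) * gj1 := by group
    _ = (g1 ^ (b % 2) * (gj ^ (2:ℤ)) ^ (b / 2)) * gj ^ (b % 2) * gj1 := by rw [← hc3]
    _ = g1 ^ (b % 2) * ((gj ^ (2:ℤ)) ^ (b / 2) * gj ^ (b % 2)) * gj1 := by group
  have keyinv : ∀ b : ℤ, gj1⁻¹ * gj ^ b = g1 ^ (-(b % 2)) * gj ^ b * gj1⁻¹ := by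
    intro b
    apply mul_left_cancel (a := gj1)
    calc gj1 * (gj1⁻¹ * gj ^ b) = gj ^ b := by group
    _ = g1 ^ (-(b % 2)) * (g1 ^ (b % 2) * gj ^ b * gj1) * gj1⁻¹ := by group
    _ = g1 ^ (-(b % 2)) * (gj1 * gj ^ b) * gj1⁻¹ := by rw [key]
    _ = g1 ^ (-(b % 2)) * gj1 * (gj ^ b * gj1⁻¹) := by group
    _ = gj1 * g1 ^ (-(b % 2)) * (gj ^ b * gj1⁻¹) := by rw [(c1.zpow_left _).eq]
    _ = gj1 * (g1 ^ (-(b % 2)) * gj ^ b * gj1⁻¹) := by group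
  intro a b
  induction a using Int.induction_on with
  | zero => simp
  | succ k ih =>
      calc gj1 ^ ((k:ℤ)+1) * gj ^ b = gj1 ^ (k:ℤ) * (gj1 * gj ^ b) := by
            rw [zpow_add_one]; group
      _ = gj1 ^ (k:ℤ) * (g1 ^ (b % 2) * gj ^ b * gj1) := by rw [key]
      _ = (gj1 ^ (k:ℤ) * g1 ^ (b % 2)) * gj ^ b * gj1 := by group
      _ = (g1 ^ (b % 2) * gj1 ^ (k:ℤ)) * gj ^ b * gj1 := by
            rw [((c1.zpow_left _).zpow_right _).eq]
      _ = g1 ^ (b % 2) * (gj1 ^ (k:ℤ) * gj ^ b) * gj1 := by group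
      _ = g1 ^ (b % 2) * (g1 ^ ((k:ℤ) * (b % 2)) * gj ^ b * gj1 ^ (k:ℤ)) * gj1 := by rw [ih]
      _ = g1 ^ (b % 2 + (k:ℤ) * (b % 2)) * gj ^ b * gj1 ^ ((k:ℤ)+1) := by
            rw [zpow_add, zpow_add_one]; group
      _ = g1 ^ (((k:ℤ)+1) * (b % 2)) * gj ^ b * gj1 ^ ((k:ℤ)+1) := by ring_nf
  | pred k ih =>
      calc gj1 ^ (-(k:ℤ)-1) * gj ^ b = gj1 ^ (-(k:ℤ)) * (gj1⁻¹ * gj ^ b) := by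
            rw [zpow_sub_one]; group
      _ = gj1 ^ (-(k:ℤ)) * (g1 ^ (-(b % 2)) * gj ^ b * gj1⁻¹) := by rw [keyinv]
      _ = (gj1 ^ (-(k:ℤ)) * g1 ^ (-(b % 2))) * gj ^ b * gj1⁻¹ := by group
      _ = (g1 ^ (-(b % 2)) * gj1 ^ (-(k:ℤ))) * gj ^ b * gj1⁻¹ := by
            rw [((c1.zpow_left _).zpow_right _).eq]
      _ = g1 ^ (-(b % 2)) * (gj1 ^ (-(k:ℤ)) * gj ^ b) * gj1⁻¹ := by group
      _ = g1 ^ (-(b % 2)) * (g1 ^ (-(k:ℤ) * (b % 2)) * gj ^ b * gj1 ^ (-(k:ℤ))) * gj1⁻¹ := by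
            rw [ih]
      _ = g1 ^ (-(b % 2) + -(k:ℤ) * (b % 2)) * gj ^ b * gj1 ^ (-(k:ℤ)-1) := by
            rw [zpow_add, zpow_sub_one]; group
      _ = g1 ^ ((-(k:ℤ)-1) * (b % 2)) * gj ^ b * gj1 ^ (-(k:ℤ)-1) := by ring_nf
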